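/- Exchange inequality for a pair of links: if 0 ≤ w_j ≤ w_i < 1, then F_D(w_i) + F_I(w_i, w_j) ≥ F_D(w_j) + F_I(w_j, w_i), where F_D(w) = 12w²/((1+3w²)(1−w²)) and F_I(a,b) = 12 a² b⁴/((1+3a²b²)(1−a²b²)). -/

import Mathlib

set_option maxHeartbeats 1000000

noncomputable def F_D (w : ℝ) : ℝ := 12 * w^2 / ((1 + 3 * w^2) * (1 - w^2))
noncomputable def F_I (a b : ℝ) : ℝ := 12 * a^2 * b^4 / ((1 + 3 * a^2 * b^2) * (1 - a^2 * b^2))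

lemma keyQ (x y : ℝ) (hx0 : 0 ≤ x) (hx1 : x ≤ 1) (hy0 : 0 ≤ y) (hy1 : y ≤ 1) :
    x*y*((1+3*x)*(1-x))*((1+3*y)*(1-y)) ≤ (1+3*x*y)^2*(1-x*y) := by
  have h1 : 0 ≤ x*y*(x-y)^2 := mul_nonneg (mul_nonneg hx0 hy0) (sq_nonneg _)
  have h2 : 0 ≤ x*y*((1-x)*(1-y)) := mul_nonneg (mul_nonneg hx0 hy0)
    (mul_nonneg (by linarith) (by linarith))
  have h3 : 0 ≤ x^2*y^2*(x*(1-y)+y*(1-x)) := by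
    have := mul_nonneg hx0 (sub_nonneg.2 hy1)
    have := mul_nonneg hy0 (sub_nonneg.2 hx1)
    positivity
  have hp1 : x*y ≤ 1 := by nlinarith
  have h4 : 0 ≤ (1-x*y)*(6*x^2*y^2+3*x*y+1) := by
    have : 0 ≤ x*y := mul_nonneg hx0 hy0
    nlinarith
  nlinarith [h1, h2, h3, h4]

lemma main_xy (x y : ℝ) (hx0 : 0 ≤ x) (hy0 : 0 ≤ y) (hyx : y ≤ x) (hx1 : x < 1) :
    12*x/((1+3*x)*(1-x)) + 12*(x*y^2)/((1+3*(x*y))*(1-x*y)) ≥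
      12*y/((1+3*y)*(1-y)) + 12*(y*x^2)/((1+3*(x*y))*(1-x*y)) := by
  have hy1 : y < 1 := lt_of_le_of_lt hyx hx1
  have hp1 : x*y < 1 := by nlinarith
  have hA : 0 < (1 + 3*x)*(1-x) := mul_pos (by linarith) (by linarith)
  have hB : 0 < (1 + 3*y)*(1-y) := mul_pos (by linarith) (by linarith)
  have hC : 0 < (1 + 3*(x*y))*(1-x*y) := mul_pos (by nlinarith) (by linarith)
  have hkey := keyQ x y hx0 hx1.le hy0 hy1.le
  have hnum : 0 ≤ 12*(x-y)*((1+3*x*y)^2*(1-x*y) - x*y*((1+3*x)*(1-x))*((1+3*y)*(1-y))) :=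
    mul_nonneg (by linarith) (by linarith)
  have hd : 12*x/((1+3*x)*(1-x)) + 12*(x*y^2)/((1+3*(x*y))*(1-x*y)) -
      (12*y/((1+3*y)*(1-y)) + 12*(y*x^2)/((1+3*(x*y))*(1-x*y))) =
      12*(x-y)*((1+3*x*y)^2*(1-x*y) - x*y*((1+3*x)*(1-x))*((1+3*y)*(1-y))) /
        (((1 + 3*x)*(1-x)) * ((1 + 3*y)*(1-y)) * ((1 + 3*(x*y))*(1-x*y))) := by
    have e1 : (1:ℝ) - x ≠ 0 := by linarith
    have e2 : (1:ℝ) + 3*x ≠ 0 := by linarith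
    have e3 : (1:ℝ) - y ≠ 0 := by linarith
    have e4 : (1:ℝ) + 3*y ≠ 0 := by linarith
    have e5 : (1:ℝ) - x*y ≠ 0 := by linarith
    have e6 : (1:ℝ) + 3*(x*y) ≠ 0 := by nlinarith
    field_simp
    ring
  have hpos : 0 ≤ 12*(x-y)*((1+3*x*y)^2*(1-x*y) - x*y*((1+3*x)*(1-x))*((1+3*y)*(1-y))) /
        (((1 + 3*x)*(1-x)) * ((1 + 3*y)*(1-y)) * ((1 + 3*(x*y))*(1-x*y))) :=
    div_nonneg hnum (by positivity)
  linarith [hd ▸ hpos]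

theorem pair_exchange (wi wj : ℝ) (hj0 : 0 ≤ wj) (hji : wj ≤ wi) (hi1 : wi < 1) :
    F_D wi + F_I wi wj ≥ F_D wj + F_I wj wi := by
  have hi0 : 0 ≤ wi := le_trans hj0 hji
  have h := main_xy (wi^2) (wj^2) (sq_nonneg wi) (sq_nonneg wj) (by nlinarith) (by nlinarith)
  unfold F_D F_I
  ring_nf at h ⊢
  linarith [h]
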